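/- Let H be an invertible Hermitian n×n complex matrix and let B be H-nonnegative, i.e. ⟨H B x, x⟩ ≥ 0 for all x ∈ ℂⁿ (equivalently HB is positive semidefinite and B is H-selfadjoint). If B has an H-nonnegative square root A (A² = B, ⟨H A x, x⟩ ≥ 0 for all x), then B is diagonalizable and all eigenvalues of B are nonnegative reals. -/

import Mathlib

open Matrix Polynomial Module
open Matrix Polynomial Module

private lemma myConjPow {m : Type*} [Fintype m] [DecidableEq m]
    (U V X : Matrix m m ℂ) (hUV : U * V = 1) (hVU : V * U = 1) :
    ∀ k : ℕ, (U * X * V) ^ k = U * X ^ k * V := by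
  intro k
  induction k with
  | zero => simp [hUV]
  | succ k ih =>
      rw [pow_succ, ih, pow_succ]
      calc U * X ^ k * V * (U * X * V) = U * X ^ k * (V * U) * X * V := by
            simp only [Matrix.mul_assoc]
        _ = U * (X ^ k * X) * V := by rw [hVU]; simp only [Matrix.mul_one, Matrix.mul_assoc]

private lemma aeval_conj {m : Type*} [Fintype m] [DecidableEq m]
    (U V X : Matrix m m ℂ) (hUV : U * V = 1) (hVU : V * U = 1) (p : ℂ[X]) :
    aeval (U * X * V) p = U * aeval X p * V := by
  induction p using Polynomial.induction_on' with
  | add p q hp hq => simp [hp, hq, Matrix.mul_add, Matrix.add_mul]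
  | monomial k c =>
      simp only [aeval_monomial, myConjPow U V X hUV hVU k]
      rw [Algebra.algebraMap_eq_smul_one]
      simp [Matrix.smul_mul, Matrix.mul_smul, Matrix.mul_assoc, hUV]
open Matrix Polynomial Module

private lemma myDiag {n : ℕ} (B : Matrix (Fin n) (Fin n) ℂ) (p : ℂ[X])
    (hp : Squarefree p) (h0 : aeval B p = 0) :
    ∃ (S : Matrix (Fin n) (Fin n) ℂ) (d : Fin n → ℂ),
      IsUnit S ∧ B = S * Matrix.diagonal d * S⁻¹ := by
  set f : End ℂ (Fin n → ℂ) := Matrix.toLinAlgEquiv' B with hf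
  have haf : aeval f p = 0 := by
    rw [hf, aeval_algHom_apply (Matrix.toLinAlgEquiv' (R := ℂ) (n := Fin n)), h0, map_zero]
  have hss : f.IsSemisimple := Module.End.isSemisimple_of_squarefree_aeval_eq_zero hp haf
  have hfs := hss.isFinitelySemisimple
  have htop : ⨆ μ, f.eigenspace μ = ⊤ := by
    have h := Module.End.iSup_maxGenEigenspace_eq_top f
    simpa only [hfs.maxGenEigenspace_eq_eigenspace] using h
  have hint : DirectSum.IsInternal f.eigenspace :=
    (DirectSum.isInternal_submodule_iff_iSupIndep_and_iSup_eq_top _).2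
      ⟨f.eigenspaces_iSupIndep, htop⟩
  let bs : ∀ μ : ℂ, Basis (Fin (finrank ℂ (f.eigenspace μ))) ℂ (f.eigenspace μ) :=
    fun μ => Module.finBasis ℂ _
  let b := hint.collectedBasis bs
  let e := b.indexEquiv (Pi.basisFun ℂ (Fin n))
  let c := b.reindex e
  let d : Fin n → ℂ := fun i => (e.symm i).1
  have hc : ∀ i, f (c i) = d i • c i := by
    intro i
    have hmem : c i ∈ f.eigenspace (d i) := by
      show (b.reindex e) i ∈ _
      rw [Module.Basis.reindex_apply]
      exact hint.collectedBasis_mem bs (e.symm i)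
    exact Module.End.mem_eigenspace_iff.mp hmem
  have hdiag : LinearMap.toMatrix c c f = Matrix.diagonal d := by
    ext i j
    rw [LinearMap.toMatrix_apply, hc, _root_.map_smul, Basis.repr_self]
    rw [Finsupp.smul_apply, Finsupp.single_apply, Matrix.diagonal_apply]
    by_cases h : i = j <;> simp [h]
    exact fun hji => (h hji.symm).elim
  set S := (Pi.basisFun ℂ (Fin n)).toMatrix c with hS
  have h1 : S * c.toMatrix (Pi.basisFun ℂ (Fin n)) = 1 :=
    (Pi.basisFun ℂ (Fin n)).toMatrix_mul_toMatrix_flip c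
  have hSinv : S⁻¹ = c.toMatrix (Pi.basisFun ℂ (Fin n)) := Matrix.inv_eq_right_inv h1
  refine ⟨S, d, (Matrix.isUnit_iff_isUnit_det S).2 (Matrix.isUnit_det_of_right_inverse h1), ?_⟩
  have h2 := basis_toMatrix_mul_linearMap_toMatrix_mul_basis_toMatrix
    (Pi.basisFun ℂ (Fin n)) c (Pi.basisFun ℂ (Fin n)) c f
  rw [hdiag] at h2
  rw [hSinv, h2, LinearMap.toMatrix_eq_toMatrix']
  exact (LinearMap.toMatrix'_toLin' B).symm

open scoped ComplexOrder

theorem H_nonnegative_sq_root_implies_diagonalizable {n : ℕ}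
    (H B : Matrix (Fin n) (Fin n) ℂ)
    (hH : H.IsHermitian) (hHinv : IsUnit H)
    (hB : (H * B).PosSemidef)
    (hA : ∃ A : Matrix (Fin n) (Fin n) ℂ, A ^ 2 = B ∧ (H * A).PosSemidef) :
    (∃ (S : Matrix (Fin n) (Fin n) ℂ) (d : Fin n → ℂ),
        IsUnit S ∧ B = S * Matrix.diagonal d * S⁻¹) ∧
      ∀ z ∈ spectrum ℂ B, ∃ r : ℝ, 0 ≤ r ∧ z = (r : ℂ) := by
  obtain ⟨A, hA2, hHA⟩ := hA
  have hdet : IsUnit H.det := (Matrix.isUnit_iff_isUnit_det H).mp hHinv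
  set N := (open scoped MatrixOrder in CFC.sqrt (H * A)) with hNdef
  have hNps : N.PosSemidef := by open scoped MatrixOrder in exact (CFC.sqrt_nonneg _).posSemidef
  have hNN : N * N = H * A := by open scoped MatrixOrder in exact CFC.sqrt_mul_sqrt_self _ hHA.nonneg
  have hAeq : A = H⁻¹ * (N * N) := by
    rw [hNN, ← Matrix.mul_assoc, Matrix.nonsing_inv_mul _ hdet, Matrix.one_mul]
  set T := H⁻¹ * N with hTdef
  set K := N * H⁻¹ * N with hKdef
  have hKH : K.IsHermitian := by
    have h1 : H⁻¹.IsHermitian := hH.inv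
    show Kᴴ = K
    rw [hKdef]
    simp [Matrix.conjTranspose_mul, hNps.isHermitian.eq, h1.eq, Matrix.mul_assoc]
  have hNT : N * T = K := by rw [hTdef, hKdef, Matrix.mul_assoc]
  have hBeq : B = T * K * N := by
    rw [← hA2, pow_two, hAeq, hTdef, hKdef]
    simp only [Matrix.mul_assoc]
  have hNT' : ∀ X : Matrix (Fin n) (Fin n) ℂ, N * (T * X) = K * X := by
    intro X; rw [← Matrix.mul_assoc, hNT]
  have hpow : ∀ m : ℕ, B ^ (m + 1) = T * K ^ (2 * m + 1) * N := by
    intro m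
    induction m with
    | zero => simpa using hBeq
    | succ m ih =>
        rw [pow_succ, ih, hBeq]
        have e3 : K ^ (2 * (m + 1) + 1) = K ^ (2 * m + 1) * K * K := by
          rw [show 2 * (m + 1) + 1 = (2 * m + 1) + 1 + 1 from by ring, pow_succ, pow_succ]
        rw [e3]
        simp only [Matrix.mul_assoc, hNT']
  have haev : ∀ v : ℂ[X], aeval B (X * v) = T * (K * aeval (K * K) v) * N := by
    intro v
    induction v using Polynomial.induction_on' with
    | add p q hp hq =>
        rw [mul_add, map_add, hp, hq, map_add]
        simp only [Matrix.mul_add, Matrix.add_mul]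
    | monomial m c =>
        have hXm : X * monomial m c = monomial (m + 1) c := by
          rw [mul_comm, monomial_mul_X]
        rw [hXm, aeval_monomial, aeval_monomial, Algebra.algebraMap_eq_smul_one]
        have hKK : K ^ (2 * m + 1) = K * (K * K) ^ m := by
          rw [pow_succ', pow_mul, sq]
        rw [hpow m, hKK]
        simp only [smul_mul_assoc, one_mul, Matrix.mul_smul, Matrix.smul_mul, Matrix.mul_assoc]
  -- the annihilating polynomial
  set ev := hKH.eigenvalues with hev
  set R : Finset ℂ := insert 0 (Finset.univ.image fun i => ((ev i : ℂ)) ^ 2) with hR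
  set q₀ : ℂ[X] := ∏ z ∈ R.erase 0, (X - C z) with hq0
  set p : ℂ[X] := ∏ z ∈ R, (X - C z) with hp
  have hzR : (0 : ℂ) ∈ R := Finset.mem_insert_self _ _
  have hps : p = X * q₀ := by
    rw [hp, ← Finset.mul_prod_erase R _ hzR, map_zero, sub_zero, hq0]
  have hpsf : Squarefree p := by
    have hsep : p.Separable := by
      rw [hp, ← Finset.prod_attach R fun z => X - C z]
      exact (separable_prod_X_sub_C_iff).2 Subtype.coe_injective
    exact hsep.squarefree
  -- key : the odd polynomial kills K
  have hkey : K * aeval (K * K) q₀ = 0 := by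
    have h1 : aeval K (X * q₀.comp (X ^ 2)) = K * aeval (K * K) q₀ := by
      rw [_root_.map_mul, aeval_X, aeval_comp]
      congr 2
      rw [map_pow, aeval_X, sq]
    rw [← h1]
    -- spectral theorem
    set U : Matrix (Fin n) (Fin n) ℂ := (hKH.eigenvectorUnitary : Matrix (Fin n) (Fin n) ℂ) with hU
    have hUV : U * star U = 1 := Unitary.mul_star_self_of_mem hKH.eigenvectorUnitary.2
    have hVU : star U * U = 1 := Unitary.star_mul_self_of_mem hKH.eigenvectorUnitary.2
    have hKspec : K = U * Matrix.diagonal (RCLike.ofReal ∘ ev) * star U := by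
      have := hKH.spectral_theorem
      rw [← hev] at this
      exact this
    rw [hKspec, aeval_conj U (star U) _ hUV hVU]
    have hdiagz : aeval (Matrix.diagonal (RCLike.ofReal ∘ ev) : Matrix (Fin n) (Fin n) ℂ) (X * q₀.comp (X ^ 2)) = 0 := by
      have hd : Matrix.diagonal (RCLike.ofReal ∘ ev) =
          Matrix.diagonalAlgHom ℂ (fun i => ((ev i : ℂ))) := by
        rw [Matrix.diagonalAlgHom_apply]; rfl
      rw [hd, aeval_algHom_apply, ← map_zero (Matrix.diagonalAlgHom (n := Fin n) ℂ)]
      congr 1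
      funext i
      simp only [Pi.zero_apply]
      have hi : (aeval (fun i => ((ev i : ℂ))) (X * q₀.comp (X ^ 2))) i
          = aeval ((ev i : ℂ)) (X * q₀.comp (X ^ 2)) :=
        (aeval_algHom_apply (Pi.evalAlgHom ℂ (fun _ => ℂ) i)
          (fun i => ((ev i : ℂ))) (X * q₀.comp (X ^ 2))).symm
      rw [hi]
      rw [_root_.map_mul, aeval_X, aeval_comp, map_pow, aeval_X]
      by_cases h0 : ev i = 0
      · simp [h0]
      · rw [hq0, map_prod]
        have hmem : ((ev i : ℂ)) ^ 2 ∈ R.erase 0 := by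
          refine Finset.mem_erase.2 ⟨?_, ?_⟩
          · exact pow_ne_zero _ (by exact_mod_cast h0)
          · rw [hR]
            exact Finset.mem_insert_of_mem (Finset.mem_image.2 ⟨i, Finset.mem_univ i, rfl⟩)
        rw [Finset.prod_eq_zero hmem (by simp), mul_zero]
    rw [hdiagz, Matrix.mul_zero, Matrix.zero_mul]
  have hann : aeval B p = 0 := by
    rw [hps, haev, hkey, Matrix.mul_zero, Matrix.zero_mul]
  constructor
  · exact myDiag B p hpsf hann
  · intro z hz
    have hev0 : p.eval z = 0 := by
      have hmem := spectrum.subset_polynomial_aeval B p ⟨z, hz, rfl⟩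
      rw [hann] at hmem
      by_contra hne
      rw [spectrum.mem_iff] at hmem
      apply hmem
      rw [sub_zero]
      exact (isUnit_iff_ne_zero.2 hne).map (algebraMap ℂ (Matrix (Fin n) (Fin n) ℂ))
    rw [hp, eval_prod] at hev0
    obtain ⟨w, hwR, hw⟩ := Finset.prod_eq_zero_iff.1 hev0
    simp only [eval_sub, eval_X, eval_C, sub_eq_zero] at hw
    rw [hR, Finset.mem_insert] at hwR
    rcases hwR with h | h
    · exact ⟨0, le_refl 0, by rw [hw, h]; simp⟩
    · obtain ⟨i, -, hi⟩ := Finset.mem_image.1 h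
      exact ⟨ev i ^ 2, sq_nonneg _, by rw [hw, ← hi]; push_cast; ring⟩
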